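/- arXiv:1607.00547 — 7 statements merged into one kernel-verified Lean document; each statement's English description precedes it below -/
import Mathlib

section
/- Let 𝔊 be a permutation group acting on a finite set V with orbit S, and let 𝔥 ≤ 𝔊 with an orbit T ⊆ S. If |S|/|T| equals the index [𝔊 : 𝔥], then T is a block for 𝔊 and 𝔥 is the setwise stabilizer of T. -/
open Pointwise

/-- If H ≤ G has an orbit T inside an orbit S of G with |S| = [G : H]·|T|, then T is a
block for G and H is the setwise stabilizer of T. -/
theorem stmt_8 (G : Type*) {V : Type*} [Group G] [Fintype V] [MulAction G V]
    (H : Subgroup G) (t : V)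
    (hcard : Nat.card (MulAction.orbit G t) = H.index * Nat.card (MulAction.orbit H t)) :
    MulAction.IsBlock G (MulAction.orbit H t) ∧
      MulAction.stabilizer G (MulAction.orbit H t) = H := by
  classical
  set K := MulAction.stabilizer G t with hK
  have hkey : K.subgroupOf H = MulAction.stabilizer H t := by ext; rfl
  have h1 : K.index = Nat.card (MulAction.orbit G t) := by
    rw [MulAction.index_stabilizer, Nat.card_coe_set_eq]
  have h2 : K.relIndex H = Nat.card (MulAction.orbit H t) := by
    rw [Subgroup.relIndex, hkey, MulAction.index_stabilizer, Nat.card_coe_set_eq]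
  have hne : Nat.card (MulAction.orbit G t) ≠ 0 := by
    have : Nonempty (MulAction.orbit G t) := ⟨⟨t, MulAction.mem_orbit_self t⟩⟩
    exact Nat.card_pos.ne'
  have hpos : 0 < K.index := by rw [h1]; exact Nat.pos_of_ne_zero hne
  -- (K ⊓ H).index = K.relIndex H * H.index
  have e1 : K.relIndex H * H.index = (K ⊓ H).index := by
    rw [← Subgroup.inf_relIndex_right]
    exact Subgroup.relIndex_mul_index inf_le_right
  have e2 : (K ⊓ H).relIndex K * K.index = (K ⊓ H).index :=
    Subgroup.relIndex_mul_index inf_le_left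
  have e3 : K.index = (K ⊓ H).relIndex K * K.index := by
    rw [e2, ← e1, h1, h2, hcard, mul_comm]
  have e4 : (K ⊓ H).relIndex K = 1 := by
    have := e3.symm
    rw [← one_mul K.index] at this
    exact Nat.eq_of_mul_eq_mul_right hpos (by linarith)
  have hle : K ≤ H :=
    le_trans (Subgroup.relIndex_eq_one.mp e4) inf_le_right
  exact ⟨MulAction.IsBlock.of_orbit hle, MulAction.stabilizer_orbit_eq hle⟩
end

section
/- Let 𝔊 be a permutation group on a finite set V, B a block for 𝔊 contained in one orbit, 𝔑 = ⋂_{σ∈𝔊} 𝔊_{σB}, and b ∈ B. Then 𝔑·b = B if and only if 𝔑·𝔊_b = 𝔊_B (as sets of group elements). -/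
open Pointwise

/-- For a block B contained in one orbit, with N = ⋂_σ G_{σB} and b ∈ B:
N·b = B iff N·G_b = G_B as subsets of G. -/
theorem stmt_12 (G : Type*) {V : Type*} [Group G] [Fintype V] [MulAction G V]
    (B : Set V) (hB : MulAction.IsBlock G B)
    (x : V) (hBx : B ⊆ MulAction.orbit G x)
    (b : V) (hb : b ∈ B)
    (N : Subgroup G) (hN : N = ⨅ σ : G, MulAction.stabilizer G (σ • B)) :
    MulAction.orbit N b = B ↔
      (N : Set G) * (MulAction.stabilizer G b : Set G) =
        (MulAction.stabilizer G B : Set G) := by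
  have hNle : N ≤ MulAction.stabilizer G B := by
    rw [hN]
    have h := iInf_le (fun σ : G => MulAction.stabilizer G (σ • B)) (1 : G)
    simpa using h
  constructor
  · intro horb
    apply Set.Subset.antisymm
    · rintro g ⟨n, hn, ξ, hξ, rfl⟩
      have hξB : ξ • B = B := hB.smul_eq_of_mem hb (by
        rw [MulAction.mem_stabilizer_iff.mp hξ]; exact hb)
      have hnB : (n : G) • B = B := MulAction.mem_stabilizer_iff.mp (hNle hn)
      show n * ξ ∈ MulAction.stabilizer G B
      rw [MulAction.mem_stabilizer_iff, mul_smul, hξB, hnB]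
    · intro g hg
      have hgb : g • b ∈ B := by
        rw [← MulAction.mem_stabilizer_iff.mp hg]
        exact Set.smul_mem_smul_set hb
      rw [← horb] at hgb
      obtain ⟨⟨n, hn⟩, hnb⟩ := hgb
      refine ⟨n, hn, n⁻¹ * g, ?_, by group⟩
      show n⁻¹ * g ∈ MulAction.stabilizer G b
      rw [MulAction.mem_stabilizer_iff, mul_smul, ← hnb]
      simp
  · intro hprod
    apply Set.Subset.antisymm
    · rintro _ ⟨⟨n, hn⟩, rfl⟩
      have hnB : (n : G) • B = B := MulAction.mem_stabilizer_iff.mp (hNle hn)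
      rw [← hnB]
      exact Set.smul_mem_smul_set hb
    · intro c hc
      obtain ⟨g, rfl⟩ : ∃ g : G, g • b = c := by
        obtain ⟨g1, hg1⟩ := hBx hc
        obtain ⟨g2, hg2⟩ := hBx hb
        exact ⟨g1 * g2⁻¹, by simp only at hg1 hg2; rw [mul_smul, ← hg2, inv_smul_smul, hg1]⟩
      have hgB : g ∈ MulAction.stabilizer G B := by
        rw [MulAction.mem_stabilizer_iff]
        exact hB.smul_eq_of_mem hb hc
      have : g ∈ (N : Set G) * (MulAction.stabilizer G b : Set G) := by
        rw [hprod]; exact hgB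
      obtain ⟨n, hn, ξ, hξ, rfl⟩ := this
      have hξb : ξ • b = b := MulAction.mem_stabilizer_iff.mp hξ
      exact ⟨⟨n, hn⟩, show (n : G) • b = _ by rw [mul_smul, hξb]⟩
end

section
/- Let 𝔊 be a permutation group on a finite set V, let v', v'' ∈ V, and for x ∈ V let C[x] denote the connected component containing x in the bipartite graph whose vertices are the orbits of 𝔊_{v'} and of 𝔊_{v''}, with two orbits adjacent iff they intersect. Then the set of points lying in C[x] equals the orbit ⟨𝔊_{v'}, 𝔊_{v''}⟩·x of the subgroup generated by the two stabilizers. -/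
private lemma stmt_13_aux (G : Type*) {V : Type*} [Group G] [MulAction G V] (H K : Subgroup G)
    (g : G) (hg : g ∈ H ⊔ K) (z : V) :
    Relation.EqvGen (fun a b : V =>
      a ∈ MulAction.orbit H b ∨ a ∈ MulAction.orbit K b) z (g • z) := by
  have hg' : g ∈ Subgroup.closure (↑H ∪ ↑K : Set G) := by
    rwa [Subgroup.closure_union, Subgroup.closure_eq, Subgroup.closure_eq]
  have e : Subgroup.closure ((H : Set G) ∪ K) = H ⊔ K := by
    rw [Subgroup.closure_union, Subgroup.closure_eq, Subgroup.closure_eq]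
  induction hg' using Subgroup.closure_induction generalizing z with
  | mem a ha =>
      refine Relation.EqvGen.symm _ _ (Relation.EqvGen.rel _ _ ?_)
      rcases ha with ha | ha
      · exact Or.inl ⟨⟨a, ha⟩, rfl⟩
      · exact Or.inr ⟨⟨a, ha⟩, rfl⟩
  | one => simpa using Relation.EqvGen.refl z
  | mul a b ha hb iha ihb =>
      have := Relation.EqvGen.trans _ _ _ (ihb (e ▸ hb) z) (iha (e ▸ ha) (b • z))
      simpa [mul_smul] using this
  | inv a ha iha =>
      have := Relation.EqvGen.symm _ _ (iha (e ▸ ha) (a⁻¹ • z))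
      simpa [smul_smul] using this

/-- The connected component containing x in the bipartite graph of orbits of the two point
stabilizers (orbits adjacent iff they meet) covers exactly the orbit of x under the
subgroup generated by the two stabilizers: y lies in the same component as x (i.e. is
connected to x via a chain of overlapping orbits of G_{v'} and G_{v''}) iff y lies in
⟨G_{v'}, G_{v''}⟩·x. -/
theorem stmt_13 (G : Type*) {V : Type*} [Group G] [Fintype V] [MulAction G V]
    (v' v'' x : V) :
    ∀ y : V,
      Relation.EqvGen (fun a b : V =>
          a ∈ MulAction.orbit (MulAction.stabilizer G v') b ∨
            a ∈ MulAction.orbit (MulAction.stabilizer G v'') b) x y ↔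
        y ∈ MulAction.orbit
          (MulAction.stabilizer G v' ⊔ MulAction.stabilizer G v'' : Subgroup G) x := by
  intro y
  constructor
  · intro h
    induction h with
    | rel a b hab =>
        rcases hab with ⟨⟨g, hg⟩, h⟩ | ⟨⟨g, hg⟩, h⟩
        · refine ⟨⟨g⁻¹, Subgroup.mem_sup_left (inv_mem hg)⟩, ?_⟩
          show g⁻¹ • a = b
          rw [← h]; show g⁻¹ • g • b = b; simp [smul_smul]
        · refine ⟨⟨g⁻¹, Subgroup.mem_sup_right (inv_mem hg)⟩, ?_⟩
          show g⁻¹ • a = b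
          rw [← h]; show g⁻¹ • g • b = b; simp [smul_smul]
    | refl a => exact MulAction.mem_orbit_self a
    | symm a b _ ih =>
        rcases ih with ⟨g, h⟩
        refine ⟨g⁻¹, ?_⟩
        show (g : G)⁻¹ • b = a
        rw [← h]; show (g : G)⁻¹ • (g : G) • a = a; simp [smul_smul]
    | trans a b c _ _ ih1 ih2 =>
        rcases ih1 with ⟨g, h1⟩
        rcases ih2 with ⟨g', h2⟩
        refine ⟨g' * g, ?_⟩
        show ((g' : G) * g) • a = c
        rw [mul_smul]
        show (g' : G) • (g : G) • a = c
        rw [show (g : G) • a = b from h1]; exact h2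
  · rintro ⟨⟨g, hg⟩, rfl⟩
    exact stmt_13_aux G (MulAction.stabilizer G v') (MulAction.stabilizer G v'') g hg x
end

section
/- Let 𝔊 act transitively on a finite set V and define x ~ y iff the stabilizers' orbit partitions coincide: Π*_x = Π*_y, where Π*_v is the set of orbits of 𝔊_v on V. Then every equivalence class of ~ is a block for 𝔊, all classes have equal cardinality, and the classes form a block system of 𝔊. -/
open Pointwise

lemma orbit_stab_smul {G V : Type*} [Group G] [MulAction G V] (σ : G) (v w : V) :
    MulAction.orbit (MulAction.stabilizer G (σ • v)) w
      = σ • MulAction.orbit (MulAction.stabilizer G v) (σ⁻¹ • w) := by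
  ext z
  constructor
  · rintro ⟨⟨h, hh⟩, rfl⟩
    refine ⟨(σ⁻¹ * h * σ) • (σ⁻¹ • w), ⟨⟨σ⁻¹ * h * σ, ?_⟩, rfl⟩, ?_⟩
    · have : h • σ • v = σ • v := hh
      simp only [MulAction.mem_stabilizer_iff, mul_smul]
      rw [this]; simp
    · simp [mul_smul]
  · rintro ⟨_, ⟨⟨h, hh⟩, rfl⟩, rfl⟩
    refine ⟨⟨σ * h * σ⁻¹, ?_⟩, ?_⟩
    · have : h • v = v := hh
      simp only [MulAction.mem_stabilizer_iff, mul_smul, inv_smul_smul, this]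
    · simp [mul_smul]

/-- For a transitive G, relate x ~ y iff the orbit partitions of their point stabilizers
coincide. Then every equivalence class is a block for G, all classes have equal
cardinality, and the classes form a block system (G permutes the classes). -/
theorem stmt_15 (G : Type*) {V : Type*} [Group G] [Fintype V] [MulAction G V]
    [MulAction.IsPretransitive G V] :
    let P : V → Set (Set V) :=
      fun v => {S | ∃ w : V, S = MulAction.orbit (MulAction.stabilizer G v) w}
    let cls : V → Set V := fun x => {y | P y = P x}
    (∀ x : V, MulAction.IsBlock G (cls x)) ∧
      (∀ x y : V, Nat.card (cls x) = Nat.card (cls y)) ∧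
      (∀ (σ : G) (x : V), σ • cls x = cls (σ • x)) := by
  intro P cls
  have hP : ∀ (σ : G) (v : V), P (σ • v) = σ • P v := by
    intro σ v
    ext S
    constructor
    · rintro ⟨w, rfl⟩
      exact ⟨MulAction.orbit (MulAction.stabilizer G v) (σ⁻¹ • w), ⟨σ⁻¹ • w, rfl⟩,
        (orbit_stab_smul σ v w).symm⟩
    · rintro ⟨T, ⟨w, rfl⟩, rfl⟩
      exact ⟨σ • w, by rw [orbit_stab_smul σ v (σ • w), inv_smul_smul]⟩
  have hcls : ∀ (σ : G) (x : V), σ • cls x = cls (σ • x) := by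
    intro σ x
    ext z
    rw [Set.mem_smul_set_iff_inv_smul_mem]
    show P (σ⁻¹ • z) = P x ↔ P z = P (σ • x)
    rw [hP, hP]
    constructor
    · intro h
      rw [← h, smul_inv_smul]
    · intro h
      rw [h, inv_smul_smul]
  refine ⟨?_, ?_, hcls⟩
  · intro x
    rw [MulAction.isBlock_iff_smul_eq_or_disjoint]
    intro g
    rw [hcls]
    by_cases h : P (g • x) = P x
    · left
      ext z
      show P z = P (g • x) ↔ P z = P x
      rw [h]
    · right
      rw [Set.disjoint_left]
      rintro z (hz : P z = P (g • x)) (hz' : P z = P x)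
      exact h (hz ▸ hz')
  · intro x y
    obtain ⟨σ, rfl⟩ := MulAction.exists_smul_eq G x y
    rw [← hcls, Nat.card_coe_set_eq, Nat.card_coe_set_eq, Set.ncard_smul_set]
end

section
/- Let 𝔊 be a permutation group acting on a finite set V such that every point stabilizer is trivial, and let B be a minimal (nontrivial) block for 𝔊 contained in some orbit. Then the setwise stabilizer 𝔊_B is a cyclic group of prime order, and |𝔊_B| = |B|. -/
open Pointwise

/-- If all point stabilizers are trivial and B is a minimal (nontrivial) block contained in
an orbit, then the setwise stabilizer of B is cyclic of prime order, of order |B|. -/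
theorem stmt_16 (G : Type*) {V : Type*} [Group G] [Fintype V] [MulAction G V]
    (htriv : ∀ v : V, MulAction.stabilizer G v = ⊥)
    (B : Set V) (hB : MulAction.IsBlock G B)
    (t : V) (hBt : B ⊆ MulAction.orbit G t)
    (hcard : 1 < Nat.card B)
    (hmin : ∀ B' : Set V, MulAction.IsBlock G B' → B'.Nonempty → B' ⊆ B →
      B' = B ∨ ∃ b : V, B' = {b}) :
    IsCyclic (MulAction.stabilizer G B) ∧
      (Nat.card (MulAction.stabilizer G B)).Prime ∧
      Nat.card (MulAction.stabilizer G B) = Nat.card B := by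
  classical
  set H := MulAction.stabilizer G B with hH
  -- the action is free
  have hfree : ∀ (g : G) (v : V), g • v = v → g = 1 := by
    intro g v h
    have hg : g ∈ MulAction.stabilizer G v := h
    rwa [htriv v, Subgroup.mem_bot] at hg
  -- B is nonempty
  have hBne : B.Nonempty := by
    rw [← Set.nonempty_coe_sort]
    exact (Nat.card_pos_iff.mp (by omega)).1
  obtain ⟨b, hb⟩ := hBne
  -- transitivity of H on B
  have htrans : ∀ b' ∈ B, ∃ g ∈ H, g • b = b' := by
    intro b' hb'
    obtain ⟨g1, hg1⟩ := MulAction.mem_orbit_iff.mp (hBt hb)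
    obtain ⟨g2, hg2⟩ := MulAction.mem_orbit_iff.mp (hBt hb')
    have hgb : (g2 * g1⁻¹) • b = b' := by
      rw [mul_smul, ← hg1, inv_smul_smul, hg2]
    refine ⟨g2 * g1⁻¹, ?_, hgb⟩
    exact MulAction.mem_stabilizer_iff.mpr
      ((MulAction.isBlock_iff_smul_eq_of_mem.mp hB) hb (hgb ▸ hb'))
  -- the orbit of b under a subgroup of H is contained in B
  have hsub : ∀ K : Subgroup G, K ≤ H → MulAction.orbit K b ⊆ B := by
    intro K hK v hv
    obtain ⟨k, hk⟩ := hv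
    have : (k : G) • B = B := MulAction.mem_stabilizer_iff.mp (hK k.2)
    have hk' : (k : G) • b = v := hk
    rw [← hk', ← this]
    exact Set.smul_mem_smul_set hb
  -- the orbit of b under a subgroup of H is a block
  have hblock : ∀ K : Subgroup G, K ≤ H → MulAction.IsBlock G (MulAction.orbit K b) := by
    intro K hK
    rw [MulAction.isBlock_iff_smul_eq_of_mem]
    intro g a ha hga
    obtain ⟨k1, hk1⟩ := ha
    obtain ⟨k2, hk2⟩ := hga
    -- g ∈ K
    have hgK : g ∈ K := by
      have e1 : (k1 : G) • b = a := hk1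
      have e2 : (k2 : G) • b = g • a := hk2
      have h1 : ((k2 : G)⁻¹ * g * (k1 : G)) • b = b := by
        rw [mul_smul, mul_smul, e1, ← e2, inv_smul_smul]
      have h2 := hfree _ _ h1
      rw [mul_eq_one_iff_eq_inv, inv_mul_eq_iff_eq_mul] at h2
      rw [h2]
      exact K.mul_mem k2.2 (K.inv_mem k1.2)
    ext v
    constructor
    · rintro ⟨w, ⟨k, hk⟩, rfl⟩
      refine ⟨⟨g, hgK⟩ * k, ?_⟩
      show (g * (k : G)) • b = g • w
      rw [mul_smul]
      exact congrArg (g • ·) hk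
    · rintro ⟨k, hk⟩
      refine ⟨(⟨g, hgK⟩⁻¹ * k : K) • b, ⟨_, rfl⟩, ?_⟩
      show g • ((g⁻¹ * (k : G)) • b) = v
      rw [← mul_smul, mul_inv_cancel_left]
      exact hk
  -- cardinality of the orbit of b under a subgroup of H
  have horbcard : ∀ K : Subgroup G, Nat.card (MulAction.orbit K b) = Nat.card K := by
    intro K
    refine (Nat.card_congr (Equiv.ofBijective
      (fun k : K => (⟨(k : G) • b, ⟨k, rfl⟩⟩ : MulAction.orbit K b)) ⟨?_, ?_⟩)).symm
    · intro k1 k2 h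
      have h' : (k1 : G) • b = (k2 : G) • b := congrArg Subtype.val h
      have : ((k2 : G)⁻¹ * (k1 : G)) • b = b := by rw [mul_smul, h', inv_smul_smul]
      have h2 := hfree _ _ this
      ext
      exact (inv_mul_eq_one.mp h2).symm
    · rintro ⟨v, k, hk⟩
      exact ⟨k, Subtype.ext hk⟩
  -- H ≃ B, hence card H = card B
  have heq : MulAction.orbit H b = B := by
    apply Set.Subset.antisymm (hsub H le_rfl)
    intro b' hb'
    obtain ⟨g, hg, hgb⟩ := htrans b' hb'
    exact ⟨⟨g, hg⟩, hgb⟩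
  have hcardH : Nat.card H = Nat.card B := by
    rw [← heq, horbcard]
  have h1H : 1 < Nat.card H := hcardH ▸ hcard
  have hfinH : Finite H := Nat.finite_of_card_ne_zero (by omega)
  -- primality
  obtain ⟨p, hp, hdvd⟩ := (Nat.card H).exists_prime_and_dvd (by omega)
  haveI : Fact p.Prime := ⟨hp⟩
  obtain ⟨σ, hσ⟩ := exists_prime_orderOf_dvd_card' (G := H) p hdvd
  set K := Subgroup.map H.subtype (Subgroup.zpowers σ) with hKdef
  have hKle : K ≤ H := Subgroup.map_subtype_le _
  have hcardK : Nat.card K = p := by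
    rw [hKdef, ← Nat.card_congr ((Subgroup.zpowers σ).equivMapOfInjective H.subtype
      H.subtype_injective).toEquiv, Nat.card_zpowers, hσ]
  have hKne : (MulAction.orbit K b).Nonempty := ⟨b, ⟨1, one_smul _ _⟩⟩
  rcases hmin _ (hblock K hKle) hKne (hsub K hKle) with h | ⟨c, hc⟩
  · -- orbit K b = B : card H = p is prime
    have : Nat.card H = p := by
      rw [hcardH, ← h, horbcard, hcardK]
    refine ⟨?_, this ▸ hp, hcardH⟩
    exact isCyclic_of_prime_card (p := p) this
  · -- orbit is a singleton: contradiction with p prime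
    exfalso
    have hbc : b = c := by
      have hbmem : b ∈ MulAction.orbit K b := ⟨1, one_smul _ _⟩
      rw [hc] at hbmem
      exact hbmem
    have hσ1 : (σ : G) • b = b := by
      have : (σ : G) • b ∈ MulAction.orbit K b :=
        ⟨⟨σ, Subgroup.mem_map.mpr ⟨σ, Subgroup.mem_zpowers σ, rfl⟩⟩, rfl⟩
      rw [hc, ← hbc] at this
      exact this
    have : (σ : G) = 1 := hfree _ _ hσ1
    have : σ = 1 := Subtype.ext this
    rw [this, orderOf_one] at hσ
    exact hp.one_lt.ne' hσ.symm
end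

section
/- Let 𝔊 be a permutation group acting on a finite set V. Suppose B is a block for 𝔊 contained in an orbit T′ and S is an orbit of the setwise stabilizer 𝔊_B contained in another orbit T″ of 𝔊. Then B⁺ := {α·b : α ∈ 𝔊_S}, for b ∈ B, is a block for 𝔊, and 𝔊_S = 𝔊_{B⁺}. -/
open Pointwise

/-- If B is a block contained in the orbit of b and S is an orbit of G_B inside a
different orbit of G, then B⁺ = G_S·b is a block for G, with G_S = G_{B⁺}. -/
theorem stmt_18 (G : Type*) {V : Type*} [Group G] [Fintype V] [MulAction G V]
    (B : Set V) (hB : MulAction.IsBlock G B)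
    (b : V) (hb : b ∈ B) (hBo : B ⊆ MulAction.orbit G b)
    (s : V) (hs : s ∉ MulAction.orbit G b)
    (S : Set V) (hS : S = MulAction.orbit (MulAction.stabilizer G B) s) :
    MulAction.IsBlock G (MulAction.orbit (MulAction.stabilizer G S) b) ∧
      MulAction.stabilizer G S =
        MulAction.stabilizer G (MulAction.orbit (MulAction.stabilizer G S) b) := by
  have hBS : MulAction.stabilizer G B ≤ MulAction.stabilizer G S := by
    intro g hg
    subst hS
    rw [MulAction.mem_stabilizer_iff]
    have := MulAction.smul_orbit (⟨g, hg⟩ : MulAction.stabilizer G B) s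
    exact this
  have key : MulAction.stabilizer G b ≤ MulAction.stabilizer G S :=
    (hB.stabilizer_le hb).trans hBS
  exact ⟨MulAction.IsBlock.of_orbit key, (MulAction.stabilizer_orbit_eq key).symm⟩
end

section
/- Let S be an isometry of ℝⁿ, U an S-invariant subspace, and u₀ ∈ U a unit vector maximizing (or minimizing) ⟨u, Su⟩ over all unit vectors u ∈ U. Then the two-dimensional subspace span{u₀, S u₀} is S-invariant. -/
private lemma aux_b_zero (b d : ℝ) (h : ∀ t : ℝ, t * b + t ^ 2 * d ≤ 0) : b = 0 := by
  by_contra hb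
  have hd : d ≤ 0 := by have h1 := h 1; have h2 := h (-1); nlinarith
  rcases hd.lt_or_eq with hlt | heq
  · have ht := h (-b / (2 * d))
    have hdne : d ≠ 0 := hlt.ne
    have hkey : (-b / (2 * d)) * b + (-b / (2 * d)) ^ 2 * d = -b ^ 2 / (4 * d) := by
      field_simp
      ring
    rw [hkey] at ht
    have hb2 : 0 < b ^ 2 := by positivity
    have : 0 < -b ^ 2 / (4 * d) := by
      apply div_pos_of_neg_of_neg <;> nlinarith
    linarith
  · have h1 := h 1; have h2 := h (-1)
    rw [← heq] at h1 h2
    have : b = 0 := by nlinarith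
    exact hb this

/-- If S is an isometry of ℝⁿ, U an S-invariant subspace, and u₀ ∈ U a unit vector
maximizing (or minimizing) ⟨u, Su⟩ over unit vectors of U, then span{u₀, Su₀} is
S-invariant. -/
theorem stmt_19 (n : ℕ)
    (S : EuclideanSpace ℝ (Fin n) →ₗᵢ[ℝ] EuclideanSpace ℝ (Fin n))
    (U : Submodule ℝ (EuclideanSpace ℝ (Fin n)))
    (hU : ∀ u ∈ U, S u ∈ U)
    (u₀ : EuclideanSpace ℝ (Fin n)) (hu₀ : u₀ ∈ U) (hnorm : ‖u₀‖ = 1)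
    (hext : (∀ u ∈ U, ‖u‖ = 1 → (inner ℝ u (S u) : ℝ) ≤ (inner ℝ u₀ (S u₀) : ℝ)) ∨
            (∀ u ∈ U, ‖u‖ = 1 → (inner ℝ u₀ (S u₀) : ℝ) ≤ (inner ℝ u (S u) : ℝ))) :
    ∀ w ∈ Submodule.span ℝ {u₀, S u₀}, S w ∈ Submodule.span ℝ {u₀, S u₀} := by
  set a : ℝ := inner ℝ u₀ (S u₀) with ha
  -- quadratic expansion facts
  have expand : ∀ (t : ℝ) (v : EuclideanSpace ℝ (Fin n)), v ∈ U → (inner ℝ u₀ v : ℝ) = 0 →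
      (inner ℝ (u₀ + t • v) (S (u₀ + t • v)) : ℝ)
        = a + t * ((inner ℝ u₀ (S v) : ℝ) + (inner ℝ v (S u₀) : ℝ))
          + t ^ 2 * (inner ℝ v (S v) : ℝ) := by
    intro t v _ _
    rw [map_add, map_smul]
    rw [inner_add_left, inner_add_right, inner_add_right]
    rw [real_inner_smul_left, real_inner_smul_left, real_inner_smul_right,
        real_inner_smul_right]
    ring
  have normsq : ∀ (t : ℝ) (v : EuclideanSpace ℝ (Fin n)), (inner ℝ u₀ v : ℝ) = 0 →
      ‖u₀ + t • v‖ ^ 2 = 1 + t ^ 2 * ‖v‖ ^ 2 := by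
    intro t v hov
    have := norm_add_sq_real u₀ (t • v)
    rw [this, real_inner_smul_right, hov, norm_smul, hnorm]
    simp [mul_pow, Real.norm_eq_abs, sq_abs]
  -- extremality gives the first-order condition
  have key : ∀ v ∈ U, (inner ℝ u₀ v : ℝ) = 0 →
      (inner ℝ u₀ (S v) : ℝ) + (inner ℝ v (S u₀) : ℝ) = 0 := by
    intro v hv hov
    set b : ℝ := (inner ℝ u₀ (S v) : ℝ) + (inner ℝ v (S u₀) : ℝ) with hb
    have main : ∀ (s : ℝ) (t : ℝ), (s = 1 ∨ s = -1) →
        (∀ u ∈ U, ‖u‖ = 1 → s * (inner ℝ u (S u) : ℝ) ≤ s * a) →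
        t * (s * b) + t ^ 2 * (s * ((inner ℝ v (S v) : ℝ) - a * ‖v‖ ^ 2)) ≤ 0 := by
      intro s t hs hineq
      set w : EuclideanSpace ℝ (Fin n) := u₀ + t • v with hw
      have hwU : w ∈ U := U.add_mem hu₀ (U.smul_mem t hv)
      have hn2 : ‖w‖ ^ 2 = 1 + t ^ 2 * ‖v‖ ^ 2 := normsq t v hov
      have hnpos : 0 < ‖w‖ := by
        have h0 : (0:ℝ) < ‖w‖ ^ 2 := by rw [hn2]; positivity
        nlinarith [norm_nonneg w]
      have hu : ‖(‖w‖⁻¹ • w)‖ = 1 := by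
        rw [norm_smul, norm_inv, norm_norm, inv_mul_cancel₀ hnpos.ne']
      have hiu : (inner ℝ (‖w‖⁻¹ • w) (S (‖w‖⁻¹ • w)) : ℝ)
          = ‖w‖⁻¹ * ‖w‖⁻¹ * (inner ℝ w (S w) : ℝ) := by
        rw [map_smul, real_inner_smul_left, real_inner_smul_right]; ring
      have h1 := hineq _ (U.smul_mem _ hwU) hu
      rw [hiu] at h1
      -- s * (⟨w,Sw⟩/‖w‖²) ≤ s * a  ⇒  s*⟨w,Sw⟩ ≤ s*a*‖w‖²
      have h2 : s * (inner ℝ w (S w) : ℝ) ≤ s * a * ‖w‖ ^ 2 := by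
        have hne : ‖w‖ ≠ 0 := hnpos.ne'
        have h3 : s * (‖w‖⁻¹ * ‖w‖⁻¹ * (inner ℝ w (S w) : ℝ)) ≤ s * a := by
          linarith [h1]
        have h4 := mul_le_mul_of_nonneg_left h3 (le_of_lt (by positivity : (0:ℝ) < ‖w‖ ^ 2))
        calc s * (inner ℝ w (S w) : ℝ)
            = ‖w‖ ^ 2 * (s * (‖w‖⁻¹ * ‖w‖⁻¹ * (inner ℝ w (S w) : ℝ))) := by
              field_simp
          _ ≤ ‖w‖ ^ 2 * (s * a) := h4
          _ = s * a * ‖w‖ ^ 2 := by ring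
      rw [expand t v hv hov, hn2] at h2
      rcases hs with rfl | rfl <;> (rw [hb]; nlinarith [h2])
    have hbz : b = 0 := by
      rcases hext with hmax | hmin
      · have := aux_b_zero b ((inner ℝ v (S v) : ℝ) - a * ‖v‖ ^ 2) (fun t => by
          have := main 1 t (Or.inl rfl) (fun u hu h1 => by simpa using hmax u hu h1)
          simpa using this)
        exact this
      · have := aux_b_zero (-b) (-((inner ℝ v (S v) : ℝ) - a * ‖v‖ ^ 2)) (fun t => by
          have := main (-1) t (Or.inr rfl) (fun u hu h1 => by
            have := hmin u hu h1; linarith)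
          linarith [this])
        linarith
    exact hbz
  -- surjectivity of S on U
  haveI : FiniteDimensional ℝ U := inferInstance
  set f : U →ₗ[ℝ] U := S.toLinearMap.restrict hU with hf
  have hfinj : Function.Injective f := by
    intro x y hxy
    have : S (x : EuclideanSpace ℝ (Fin n)) = S (y : EuclideanSpace ℝ (Fin n)) := by
      have := congrArg (Subtype.val) hxy
      simpa [hf, LinearMap.restrict_apply] using this
    exact Subtype.ext (S.injective this)
  have hfsurj : Function.Surjective f := LinearMap.injective_iff_surjective.mp hfinj
  obtain ⟨y, hy⟩ := hfsurj ⟨u₀, hu₀⟩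
  have hSy : S (y : EuclideanSpace ℝ (Fin n)) = u₀ := by
    have := congrArg (Subtype.val) hy
    simpa [hf, LinearMap.restrict_apply] using this
  -- z := y + S u₀ is orthogonal to everything in U ⊥ u₀
  set z : EuclideanSpace ℝ (Fin n) := (y : EuclideanSpace ℝ (Fin n)) + S u₀ with hz
  have hzU : z ∈ U := U.add_mem y.2 (hU _ hu₀)
  have hzperp : ∀ v ∈ U, (inner ℝ u₀ v : ℝ) = 0 → (inner ℝ z v : ℝ) = 0 := by
    intro v hv hov
    have h1 : (inner ℝ (y : EuclideanSpace ℝ (Fin n)) v : ℝ) = (inner ℝ u₀ (S v) : ℝ) := by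
      rw [← hSy, S.inner_map_map]
    rw [hz, inner_add_left, h1, real_inner_comm v (S u₀)]
    exact key v hv hov
  -- deduce z = c • u₀
  set c : ℝ := inner ℝ u₀ z with hc
  have hself : (inner ℝ u₀ u₀ : ℝ) = 1 := by
    rw [real_inner_self_eq_norm_sq, hnorm]; norm_num
  have hv'U : z - c • u₀ ∈ U := U.sub_mem hzU (U.smul_mem c hu₀)
  have hov' : (inner ℝ u₀ (z - c • u₀) : ℝ) = 0 := by
    rw [inner_sub_right, real_inner_smul_right, hself, ← hc]; ring
  have hzv' : (inner ℝ z (z - c • u₀) : ℝ) = 0 := hzperp _ hv'U hov'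
  have hv'zero : z - c • u₀ = 0 := by
    have : (inner ℝ (z - c • u₀) (z - c • u₀) : ℝ) = 0 := by
      rw [inner_sub_left, hzv', real_inner_smul_left, hov']
      ring
    exact inner_self_eq_zero.mp this
  have hzc : z = c • u₀ := by
    have := sub_eq_zero.mp hv'zero; exact this
  -- apply S
  have hSSu : S (S u₀) = c • S u₀ - u₀ := by
    have h1 : (y : EuclideanSpace ℝ (Fin n)) = c • u₀ - S u₀ := by
      rw [← hzc, hz]; abel
    have h2 : S (y : EuclideanSpace ℝ (Fin n)) = c • S u₀ - S (S u₀) := by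
      rw [h1, map_sub, map_smul]
    rw [hSy] at h2
    rw [eq_sub_iff_add_eq] at h2
    rw [← h2]; abel
  -- finish
  intro w hw
  rw [Submodule.mem_span_pair] at hw ⊢
  obtain ⟨m, k, rfl⟩ := hw
  refine ⟨-k, m + k * c, ?_⟩
  rw [map_add, map_smul, map_smul, hSSu]
  module
end
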